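/- Let H be a finite-dimensional Hilbert space and a, b self-adjoint operators on H such that λ_i(a) ≤ λ_i(b) for all i, where λ_1 ≥ λ_2 ≥ … denote eigenvalues in decreasing order counted with multiplicity. Then there exists a unitary u on H such that u a u* ≤ b and u a u* commutes with b. -/

import Mathlib

open scoped InnerProductSpace ComplexInnerProductSpace in
lemma aux_isPositive {H : Type*} [NormedAddCommGroup H]
    [InnerProductSpace ℂ H] [FiniteDimensional ℂ H] {n : ℕ}
    (f : OrthonormalBasis (Fin n) ℂ H) (d : H →L[ℂ] H) (hsa : IsSelfAdjoint d)
    (r : Fin n → ℝ) (hd : ∀ i, d (f i) = (r i : ℂ) • f i) (hr : ∀ i, 0 ≤ r i) :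
    d.IsPositive := by
  refine ⟨hsa.isSymmetric, fun x => ?_⟩
  have hsym := hsa.isSymmetric
  have key : ⟪d x, x⟫_ℂ = ∑ i, ((r i * Complex.normSq (f.repr x i) : ℝ) : ℂ) := by
    rw [← f.repr.inner_map_map (d x) x]
    rw [PiLp.inner_apply]
    refine Finset.sum_congr rfl fun i _ => ?_
    have h2 : ⟪f i, d x⟫_ℂ = ⟪d (f i), x⟫_ℂ := (hsym (f i) x).symm
    have h1 : f.repr (d x) i = (r i : ℂ) * f.repr x i := by
      rw [f.repr_apply_apply, h2, hd i, inner_smul_left,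
        Complex.conj_ofReal, f.repr_apply_apply]
    rw [h1, RCLike.inner_apply, map_mul, Complex.conj_ofReal,
      Complex.ofReal_mul, Complex.normSq_eq_conj_mul_self]
    ring
  have hS : (0:ℝ) ≤ ∑ i, r i * Complex.normSq (f.repr x i) :=
    Finset.sum_nonneg fun i _ => mul_nonneg (hr i) (Complex.normSq_nonneg _)
  rw [ContinuousLinearMap.reApplyInnerSelf_apply, key, ← Complex.ofReal_sum]
  simpa using hS

theorem exists_unitary_conj_le_of_eigenvalues_le {H : Type*} [NormedAddCommGroup H]
    [InnerProductSpace ℂ H] [FiniteDimensional ℂ H] {n : ℕ}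
    (a b : H →L[ℂ] H) (ha : IsSelfAdjoint a) (hb : IsSelfAdjoint b)
    (e f : OrthonormalBasis (Fin n) ℂ H) (μ ν : Fin n → ℝ)
    (hμ : Antitone μ) (hν : Antitone ν)
    (hae : ∀ i, a (e i) = (μ i : ℂ) • e i) (hbf : ∀ i, b (f i) = (ν i : ℂ) • f i)
    (hle : ∀ i, μ i ≤ ν i) :
    ∃ u : H →L[ℂ] H, u ∈ unitary (H →L[ℂ] H) ∧
      u ∘L a ∘L ContinuousLinearMap.adjoint u ≤ b ∧
      Commute (u ∘L a ∘L ContinuousLinearMap.adjoint u) b := by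
  set U : H ≃ₗᵢ[ℂ] H := e.repr.trans f.repr.symm with hUdef
  have hU : ∀ i, U (e i) = f i := by
    intro i
    simp [hUdef, LinearIsometryEquiv.trans_apply, OrthonormalBasis.repr_self]
  set u : H →L[ℂ] H := (U : H →L[ℂ] H) with hudef
  have hadj : ContinuousLinearMap.adjoint u = (U.symm : H →L[ℂ] H) :=
    U.adjoint_eq_symm
  set c : H →L[ℂ] H := u ∘L a ∘L ContinuousLinearMap.adjoint u with hcdef
  have hc : ∀ i, c (f i) = (μ i : ℂ) • f i := by
    intro i
    have hUs : U.symm (f i) = e i := by rw [← hU, U.symm_apply_apply]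
    rw [hcdef]
    simp only [ContinuousLinearMap.comp_apply, hadj]
    show U (a (U.symm (f i))) = (μ i : ℂ) • f i
    rw [hUs, hae i, map_smul, hU]
  have hcsa : IsSelfAdjoint c := by
    have := ha.conjugate u
    rw [hcdef]
    simpa [ContinuousLinearMap.star_eq_adjoint, ContinuousLinearMap.mul_def,
      ContinuousLinearMap.comp_assoc] using this
  refine ⟨u, ?_, ?_, ?_⟩
  · rw [Unitary.mem_iff]
    constructor
    · rw [ContinuousLinearMap.star_eq_adjoint, hadj]
      ext x
      show U.symm (U x) = x
      simp
    · rw [ContinuousLinearMap.star_eq_adjoint, hadj]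
      ext x
      show U (U.symm x) = x
      simp
  · rw [ContinuousLinearMap.le_def]
    refine aux_isPositive f _ (hb.sub hcsa) (fun i => ν i - μ i) ?_
      (fun i => sub_nonneg.mpr (hle i))
    intro i
    show (b - c) (f i) = ((ν i - μ i : ℝ) : ℂ) • f i
    rw [ContinuousLinearMap.sub_apply, hbf i, hc i, Complex.ofReal_sub, sub_smul]
  · have h : c ∘L b = b ∘L c := by
      apply ContinuousLinearMap.coe_injective
      apply f.toBasis.ext
      intro i
      show c (b (f i)) = b (c (f i))
      rw [hbf i, map_smul, hc i, map_smul, hbf i, smul_comm]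
    simpa [Commute, SemiconjBy, ContinuousLinearMap.mul_def] using h
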